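/- Let G be a live-edge model on a directed graph (V, 𝓔) with monotone nondecreasing submodular utility H (H(∅)=0) in which the edge set 𝓔 is partitioned into groups, each group consisting of at most b edges all emanating from the same tail node; the groups are mutually independent, and within each group either all edges are simultaneously live (with some group-specific probability) or none is. Then for every step limit τ ≥ 1 and every T ⊆ V, Var[R^τ(T)] ≤ 2·b·τ · I^τ(T) · max{I^τ(T), max_{v∈V} I^τ({v})}. -/

import Mathlib

open Finset

section LiveEdge
variable {V : Type*} [Fintype V] [DecidableEq V]

/-- One step of live-edge diffusion: a node is activated when some live edge leads
to it from an already active node. -/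
def estep (E : Finset (V × V)) (A : Finset V) : Finset V :=
  A ∪ Finset.univ.filter (fun v => ∃ u ∈ A, (u, v) ∈ E)

/-- `ereach E S τ` : the set `ρ^τ(E,S)` of nodes reachable from `S` by directed
paths of at most `τ` live edges of `E`. -/
def ereach (E : Finset (V × V)) (S : Finset V) : ℕ → Finset V
  | 0 => S
  | t + 1 => estep E (ereach E S t)

/-- Submodularity of a set function. -/
def SubmodularFn (F : Finset V → ℝ) : Prop :=
  ∀ A B : Finset V, A ⊆ B → ∀ x ∉ B, F (insert x B) - F B ≤ F (insert x A) - F A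

/-- Monotone nondecreasing set function. -/
def MonotoneFn (F : Finset V → ℝ) : Prop :=
  ∀ A B : Finset V, A ⊆ B → F A ≤ F B

end LiveEdge

section AuxGraph
variable {V : Type*} [Fintype V] [DecidableEq V]

-- R1
lemma subset_estep (E : Finset (V × V)) (A : Finset V) : A ⊆ estep E A :=
  Finset.subset_union_left

lemma estep_mono_seed {E : Finset (V × V)} {A B : Finset V} (h : A ⊆ B) :
    estep E A ⊆ estep E B := by
  apply Finset.union_subset_union h
  intro v hv
  simp only [mem_filter, mem_univ, true_and] at hv ⊢
  obtain ⟨u, hu, he⟩ := hv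
  exact ⟨u, h hu, he⟩

lemma estep_mono_edges {E F : Finset (V × V)} (h : E ⊆ F) (A : Finset V) :
    estep E A ⊆ estep F A := by
  apply Finset.union_subset_union (Finset.Subset.refl _)
  intro v hv
  simp only [mem_filter, mem_univ, true_and] at hv ⊢
  obtain ⟨u, hu, he⟩ := hv
  exact ⟨u, hu, h he⟩

lemma estep_union_seed (E : Finset (V × V)) (A B : Finset V) :
    estep E (A ∪ B) = estep E A ∪ estep E B := by
  ext v
  simp only [estep, mem_union, mem_filter, mem_univ, true_and]
  constructor
  · rintro (h | ⟨u, hu | hu, he⟩)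
    · rcases h with h | h
      · exact Or.inl (Or.inl h)
      · exact Or.inr (Or.inl h)
    · exact Or.inl (Or.inr ⟨u, hu, he⟩)
    · exact Or.inr (Or.inr ⟨u, hu, he⟩)
  · rintro ((h | ⟨u, hu, he⟩) | (h | ⟨u, hu, he⟩))
    · exact Or.inl (Or.inl h)
    · exact Or.inr ⟨u, Or.inl hu, he⟩
    · exact Or.inl (Or.inr h)
    · exact Or.inr ⟨u, Or.inr hu, he⟩

lemma estep_union_edges (E F : Finset (V × V)) (A : Finset V) :
    estep (E ∪ F) A = estep E A ∪ estep F A := by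
  ext v
  simp only [estep, mem_union, mem_filter, mem_univ, true_and]
  constructor
  · rintro (h | ⟨u, hu, he | he⟩)
    · exact Or.inl (Or.inl h)
    · exact Or.inl (Or.inr ⟨u, hu, he⟩)
    · exact Or.inr (Or.inr ⟨u, hu, he⟩)
  · rintro ((h | ⟨u, hu, he⟩) | (h | ⟨u, hu, he⟩))
    · exact Or.inl h
    · exact Or.inr ⟨u, hu, Or.inl he⟩
    · exact Or.inl h
    · exact Or.inr ⟨u, hu, Or.inr he⟩

lemma subset_ereach (E : Finset (V × V)) (S : Finset V) (t : ℕ) : S ⊆ ereach E S t := by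
  induction t with
  | zero => exact Finset.Subset.refl _
  | succ t ih => exact ih.trans (subset_estep _ _)

lemma ereach_mono_seed {E : Finset (V × V)} {A B : Finset V} (h : A ⊆ B) (t : ℕ) :
    ereach E A t ⊆ ereach E B t := by
  induction t with
  | zero => exact h
  | succ t ih => exact estep_mono_seed ih

lemma ereach_mono_edges {E F : Finset (V × V)} (h : E ⊆ F) (S : Finset V) (t : ℕ) :
    ereach E S t ⊆ ereach F S t := by
  induction t with
  | zero => exact Finset.Subset.refl _
  | succ t ih => exact (estep_mono_seed ih).trans (estep_mono_edges h _)

lemma ereach_mono_steps (E : Finset (V × V)) (S : Finset V) {s t : ℕ} (h : s ≤ t) :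
    ereach E S s ⊆ ereach E S t := by
  induction t with
  | zero => simpa [Nat.le_zero.mp h] using Finset.Subset.refl _
  | succ t ih =>
      rcases Nat.eq_or_lt_of_le h with rfl | h'
      · exact Finset.Subset.refl _
      · exact (ih (Nat.lt_succ_iff.mp h')).trans (subset_estep _ _)

lemma ereach_union_seed (E : Finset (V × V)) (A B : Finset V) (t : ℕ) :
    ereach E (A ∪ B) t = ereach E A t ∪ ereach E B t := by
  induction t with
  | zero => rfl
  | succ t ih => simp [ereach, ih, estep_union_seed]

lemma ereach_empty_seed (E : Finset (V × V)) (t : ℕ) : ereach E ∅ t = ∅ := by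
  induction t with
  | zero => rfl
  | succ t ih =>
      simp only [ereach, ih, estep]
      ext v; simp

lemma ereach_biUnion_seed {α : Type*} [DecidableEq α] (E : Finset (V × V)) (s : Finset α)
    (g : α → Finset V) (t : ℕ) :
    ereach E (s.biUnion g) t = s.biUnion (fun a => ereach E (g a) t) := by
  induction s using Finset.induction_on with
  | empty => simp [ereach_empty_seed]
  | insert _ _ hnotmem ih =>
      rw [Finset.biUnion_insert, Finset.biUnion_insert, ereach_union_seed, ih]

lemma ereach_shift (E : Finset (V × V)) (S : Finset V) (t : ℕ) :
    ereach E S (t + 1) = ereach E (estep E S) t := by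
  induction t with
  | zero => rfl
  | succ t ih =>
      show estep E (ereach E S (t + 1)) = estep E (ereach E (estep E S) t)
      rw [ih]

-- useless edges: edges whose head is already in (a subset of) the seed can be dropped
lemma estep_filter_useless {E : Finset (V × V)} {S X : Finset V}
    (h : ∀ e ∈ E, e.1 ∈ S → e.2 ∈ X) (hSX : S ⊆ X) (hX : X ⊆ estep E X) :
    estep E X = estep (E.filter (fun e => e.1 ∉ S)) X := by
  apply Finset.Subset.antisymm
  · intro v hv
    simp only [estep, mem_union, mem_filter, mem_univ, true_and] at hv ⊢
    rcases hv with hv | ⟨u, hu, he⟩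
    · exact Or.inl hv
    · by_cases hus : u ∈ S
      · exact Or.inl (h (u, v) he hus)
      · exact Or.inr ⟨u, hu, he, hus⟩
  · exact estep_mono_edges (Finset.filter_subset _ _) _

lemma ereach_filter_useless {E : Finset (V × V)} {S X : Finset V}
    (h : ∀ e ∈ E, e.1 ∈ S → e.2 ∈ X) (hSX : S ⊆ X) (t : ℕ) :
    ereach E X t = ereach (E.filter (fun e => e.1 ∉ S)) X t := by
  induction t with
  | zero => rfl
  | succ t ih =>
      show estep E (ereach E X t) = estep _ (ereach _ X t)
      rw [← ih]
      apply estep_filter_useless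
      · intro e he hes
        exact (subset_ereach E X t) (h e he hes)
      · exact (hSX.trans (subset_ereach E X t)).trans (Finset.Subset.refl _)
      · exact subset_estep _ _
  
-- Master decomposition
lemma ereach_succ_master (E : Finset (V × V)) (S : Finset V) (t : ℕ) :
    ereach E S (t + 1) = ereach (E.filter (fun e => e.1 ∉ S)) (estep E S) t := by
  rw [ereach_shift]
  apply ereach_filter_useless
  · intro e he hes
    simp only [estep, mem_union, mem_filter, mem_univ, true_and]
    exact Or.inr ⟨e.1, hes, by simpa using he⟩
  · exact subset_estep _ _

end AuxGraph

section AuxSubmod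
variable {V : Type*} [Fintype V] [DecidableEq V]
variable {H : Finset V → ℝ}

-- SM1 : marginal monotone
lemma submod_marginal_mono (hHmono : MonotoneFn H) (hHsub : SubmodularFn H)
    {A B : Finset V} (hAB : A ⊆ B) (C : Finset V) :
    H (B ∪ C) - H B ≤ H (A ∪ C) - H A := by
  induction C using Finset.induction_on with
  | empty => simp
  | @insert x C hx ih =>
      rw [Finset.union_insert, Finset.union_insert]
      by_cases hxB : x ∈ B ∪ C
      · rw [Finset.insert_eq_self.mpr hxB]
        have h2 : H (B ∪ C) - H B ≤ H (insert x (A ∪ C)) - H A := by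
          refine le_trans ih ?_
          have : H (A ∪ C) ≤ H (insert x (A ∪ C)) :=
            hHmono _ _ (Finset.subset_insert _ _)
          linarith
        exact h2
      · have hsub := hHsub (A ∪ C) (B ∪ C) (Finset.union_subset_union hAB (Finset.Subset.refl _)) x hxB
        linarith

-- SM2 : subadditivity of marginal
lemma submod_union_le (hH0 : H ∅ = 0) (hHmono : MonotoneFn H) (hHsub : SubmodularFn H)
    (A C : Finset V) : H (A ∪ C) - H A ≤ H C := by
  have := submod_marginal_mono hHmono hHsub (Finset.empty_subset A) C
  rw [Finset.empty_union, hH0] at this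
  linarith

-- SM3 : union bound over a biUnion
lemma submod_biUnion_le {α : Type*} [DecidableEq α] (hH0 : H ∅ = 0) (hHmono : MonotoneFn H)
    (hHsub : SubmodularFn H) (A : Finset V) (s : Finset α) (Q : α → Finset V) :
    H (A ∪ s.biUnion Q) - H A ≤ ∑ v ∈ s, H (Q v) := by
  induction s using Finset.induction_on generalizing A with
  | empty => simp
  | @insert a s ha ih =>
      rw [Finset.biUnion_insert, Finset.sum_insert ha]
      have h1 : H (A ∪ (Q a ∪ s.biUnion Q)) - H (A ∪ Q a) ≤ ∑ v ∈ s, H (Q v) := by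
        have := ih (A ∪ Q a)
        rwa [Finset.union_assoc] at this
      have h2 : H (A ∪ Q a) - H A ≤ H (Q a) := submod_union_le hH0 hHmono hHsub A (Q a)
      linarith

-- SM4 : self-bounding removal sum
lemma submod_erase_sum_le {α : Type*} [DecidableEq α] (hHmono : MonotoneFn H)
    (hHsub : SubmodularFn H) (B : Finset V) (s : Finset α) (P : α → Finset V) :
    ∑ i ∈ s, (H (B ∪ s.biUnion P) - H (B ∪ (s.erase i).biUnion P))
      ≤ H (B ∪ s.biUnion P) - H B := by
  induction s using Finset.induction_on generalizing B with
  | empty => simp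
  | @insert a s ha ih =>
      rw [Finset.sum_insert ha]
      have hbase : ∀ i, i ∈ s → ((insert a s).erase i) = insert a (s.erase i) := by
        intro i hi
        exact Finset.erase_insert_of_ne (fun h => ha (h ▸ hi))
      have hall : B ∪ (insert a s).biUnion P = (B ∪ P a) ∪ s.biUnion P := by
        rw [Finset.biUnion_insert, ← Finset.union_assoc]
      -- term for a
      have ha_term : H (B ∪ (insert a s).biUnion P) - H (B ∪ ((insert a s).erase a).biUnion P)
          ≤ H (B ∪ P a) - H B := by
        rw [Finset.erase_insert ha, hall]
        have := submod_marginal_mono hHmono hHsub (Finset.subset_union_left (s₁ := B) (s₂ := s.biUnion P)) (P a)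
        calc H (B ∪ P a ∪ s.biUnion P) - H (B ∪ s.biUnion P)
            = H ((B ∪ s.biUnion P) ∪ P a) - H (B ∪ s.biUnion P) := by
              rw [Finset.union_right_comm]
          _ ≤ H (B ∪ P a) - H B := this
      -- terms for i ∈ s
      have hs_terms : ∑ i ∈ s, (H (B ∪ (insert a s).biUnion P) - H (B ∪ ((insert a s).erase i).biUnion P))
          ≤ H (B ∪ (insert a s).biUnion P) - H (B ∪ P a) := by
        have heq : ∀ i ∈ s,
            (H (B ∪ (insert a s).biUnion P) - H (B ∪ ((insert a s).erase i).biUnion P))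
            = (H ((B ∪ P a) ∪ s.biUnion P) - H ((B ∪ P a) ∪ (s.erase i).biUnion P)) := by
          intro i hi
          rw [hbase i hi, hall, Finset.biUnion_insert, ← Finset.union_assoc]
        rw [Finset.sum_congr rfl heq, hall]
        exact ih (B ∪ P a)
      linarith
end AuxSubmod


section BDep
variable {V : Type*} [Fintype V] [DecidableEq V] {ι : Type*} [Fintype ι] [DecidableEq ι]

/-- The set of live edges determined by the group coin flips `co`: a group's edges
are all live when its coin is `true`, and none is live otherwise. -/
def liveOf (grp : ι → Finset (V × V)) (co : ι → Bool) : Finset (V × V) :=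
  Finset.univ.biUnion (fun i => if co i then grp i else ∅)

/-- The probability of the coin-flip outcome `co` when group `i` is live
independently with probability `q i`. -/
noncomputable def coinWeight (q : ι → ℝ) (co : ι → Bool) : ℝ :=
  ∏ i, if co i then q i else 1 - q i

/-- τ-step influence of `S` in the `b`-dependence live-edge model. -/
noncomputable def bInfl (grp : ι → Finset (V × V)) (q : ι → ℝ) (H : Finset V → ℝ)
    (τ : ℕ) (S : Finset V) : ℝ :=
  ∑ co : ι → Bool, coinWeight q co * H (ereach (liveOf grp co) S τ)

/-- Variance of the τ-step reachability value of `S` in the `b`-dependence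
live-edge model. -/
noncomputable def bVar (grp : ι → Finset (V × V)) (q : ι → ℝ) (H : Finset V → ℝ)
    (τ : ℕ) (S : Finset V) : ℝ :=
  ∑ co : ι → Bool, coinWeight q co * (H (ereach (liveOf grp co) S τ) - bInfl grp q H τ S) ^ 2


section Prob
variable {ι : Type*} [Fintype ι] [DecidableEq ι]

variable (q : ι → ℝ)

noncomputable def EE (f : (ι → Bool) → ℝ) : ℝ := ∑ co : ι → Bool, coinWeight q co * f co

variable {q}
variable (hq0 : ∀ i, 0 ≤ q i) (hq1 : ∀ i, q i ≤ 1)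

include hq0 hq1 in
lemma coinWeight_nonneg (co : ι → Bool) : 0 ≤ coinWeight q co := by
  apply Finset.prod_nonneg
  intro i _
  by_cases h : co i <;> simp [h, hq0 i]
  linarith [hq1 i]

lemma coinWeight_sum_one : ∑ co : ι → Bool, coinWeight q co = 1 := by
  have h := Fintype.prod_sum (fun (i : ι) (b : Bool) => if b then q i else 1 - q i)
  have h2 : ∀ i : ι, (∑ b : Bool, if b then q i else 1 - q i) = 1 := by
    intro i; simp
  rw [Fintype.prod_congr _ _ h2] at h
  simp only [Finset.prod_const_one] at h
  rw [show (∑ co : ι → Bool, coinWeight q co) = ∑ x : ι → Bool, ∏ i : ι, if x i = true then q i else 1 - q i from rfl, ← h]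

lemma EE_add (f g : (ι → Bool) → ℝ) : EE q (fun co => f co + g co) = EE q f + EE q g := by
  simp [EE, mul_add, Finset.sum_add_distrib]

lemma EE_sub (f g : (ι → Bool) → ℝ) : EE q (fun co => f co - g co) = EE q f - EE q g := by
  simp [EE, mul_sub, Finset.sum_sub_distrib]

lemma EE_const (c : ℝ) : EE q (fun _ => c) = c := by
  simp [EE, ← Finset.sum_mul, coinWeight_sum_one]

lemma EE_smul (c : ℝ) (f : (ι → Bool) → ℝ) : EE q (fun co => c * f co) = c * EE q f := by
  simp only [EE, Finset.mul_sum]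
  apply Finset.sum_congr rfl
  intros; ring

include hq0 hq1 in
lemma EE_mono {f g : (ι → Bool) → ℝ} (h : ∀ co, f co ≤ g co) : EE q f ≤ EE q g := by
  apply Finset.sum_le_sum
  intro co _
  exact mul_le_mul_of_nonneg_left (h co) (coinWeight_nonneg hq0 hq1 co)

include hq0 hq1 in
lemma EE_nonneg {f : (ι → Bool) → ℝ} (h : ∀ co, 0 ≤ f co) : 0 ≤ EE q f := by
  have := EE_mono hq0 hq1 (f := fun _ => (0:ℝ)) (g := f) h
  rwa [EE_const] at this

lemma EE_finsum {α : Type*} (s : Finset α) (F : α → (ι → Bool) → ℝ) :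
    EE q (fun co => ∑ a ∈ s, F a co) = ∑ a ∈ s, EE q (F a) := by
  simp only [EE, Finset.mul_sum]
  rw [Finset.sum_comm]

-- W1: coordinate splitting
lemma EE_split (i : ι) (f : (ι → Bool) → ℝ) :
    EE q f = q i * EE q (fun co => f (Function.update co i true))
      + (1 - q i) * EE q (fun co => f (Function.update co i false)) := by
  classical
  set w' : (ι → Bool) → ℝ := fun co => ∏ j ∈ Finset.univ.erase i, (if co j then q j else 1 - q j)
    with hw'
  have hw : ∀ co : ι → Bool, coinWeight q co = (if co i then q i else 1 - q i) * w' co := by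
    intro co
    rw [coinWeight, ← Finset.mul_prod_erase Finset.univ _ (Finset.mem_univ i)]
  have hw'_up : ∀ (co : ι → Bool) (b : Bool), w' (Function.update co i b) = w' co := by
    intro co b
    apply Finset.prod_congr rfl
    intro j hj
    rw [Function.update_of_ne (Finset.ne_of_mem_erase hj)]
  set P := Finset.univ.filter (fun co : ι → Bool => co i = true) with hP
  set N := Finset.univ.filter (fun co : ι → Bool => co i = false) with hN
  have key : ∀ (G : (ι → Bool) → ℝ), (∀ co b, G (Function.update co i b) = G co) →
      ∑ co ∈ N, G co = ∑ co ∈ P, G co := by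
    intro G hG
    apply Finset.sum_nbij' (fun co => Function.update co i true)
      (fun co => Function.update co i false)
    · intro co _; simp [hP]
    · intro co _; simp [hN]
    · intro co hco
      simp only [hN, Finset.mem_filter, Finset.mem_univ, true_and] at hco
      rw [Function.update_idem, ← hco, Function.update_eq_self]
    · intro co hco
      simp only [hP, Finset.mem_filter, Finset.mem_univ, true_and] at hco
      rw [Function.update_idem, ← hco, Function.update_eq_self]
    · intro co _
      exact (hG co true).symm
  have split : ∀ (F : (ι → Bool) → ℝ), ∑ co : ι → Bool, F co = ∑ co ∈ P, F co + ∑ co ∈ N, F co := by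
    intro F
    rw [← Finset.sum_filter_add_sum_filter_not Finset.univ (fun co : ι → Bool => co i = true) F]
    congr 1
    apply Finset.sum_congr _ (fun _ _ => rfl)
    ext co
    simp [hN, Bool.not_eq_true]
  have memP : ∀ co ∈ P, co i = true := by
    intro co hco; simpa [hP] using hco
  have memN : ∀ co ∈ N, co i = false := by
    intro co hco; simpa [hN] using hco
  -- apply to a general integrand on each half
  have halfP : ∀ (F : (ι → Bool) → ℝ), ∑ co ∈ P, coinWeight q co * F co
      = q i * ∑ co ∈ P, w' co * F co := by
    intro F
    rw [Finset.mul_sum]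
    apply Finset.sum_congr rfl
    intro co hco
    rw [hw co, memP co hco]
    simp only [if_true]
    ring
  have halfN : ∀ (F : (ι → Bool) → ℝ), ∑ co ∈ N, coinWeight q co * F co
      = (1 - q i) * ∑ co ∈ N, w' co * F co := by
    intro F
    rw [Finset.mul_sum]
    apply Finset.sum_congr rfl
    intro co hco
    rw [hw co, memN co hco]
    simp only [Bool.false_eq_true, if_false]
    ring
  set T := ∑ co ∈ P, w' co * f co with hT
  set F' := ∑ co ∈ N, w' co * f co with hF
  have hEf : EE q f = q i * T + (1 - q i) * F' := by
    rw [EE, split, halfP, halfN]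
  have inv1 : ∀ (co : ι → Bool) (b : Bool),
      w' (Function.update co i b) * f (Function.update (Function.update co i b) i true)
        = w' co * f (Function.update co i true) := by
    intro co b; rw [hw'_up, Function.update_idem]
  have inv0 : ∀ (co : ι → Bool) (b : Bool),
      w' (Function.update co i b) * f (Function.update (Function.update co i b) i false)
        = w' co * f (Function.update co i false) := by
    intro co b; rw [hw'_up, Function.update_idem]
  have hE1 : EE q (fun co => f (Function.update co i true)) = T := by
    rw [EE, split, halfP, halfN]
    have e1 : ∑ co ∈ P, w' co * f (Function.update co i true) = T := by
      apply Finset.sum_congr rfl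
      intro co hco
      rw [← memP co hco, Function.update_eq_self]
    have e2 : ∑ co ∈ N, w' co * f (Function.update co i true)
        = ∑ co ∈ P, w' co * f (Function.update co i true) := key _ inv1
    rw [e1, e2, e1]
    ring
  have hE0 : EE q (fun co => f (Function.update co i false)) = F' := by
    rw [EE, split, halfP, halfN]
    have e2 : ∑ co ∈ N, w' co * f (Function.update co i false)
        = ∑ co ∈ P, w' co * f (Function.update co i false) := key _ inv0
    have e1 : ∑ co ∈ N, w' co * f (Function.update co i false) = F' := by
      apply Finset.sum_congr rfl
      intro co hco
      rw [← memN co hco, Function.update_eq_self]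
    rw [← e2, e1]
    ring
  rw [hEf, hE1, hE0]
end Prob

section Prob2
variable {ι : Type*} [Fintype ι] [DecidableEq ι]
variable {q : ι → ℝ} (hq0 : ∀ i, 0 ≤ q i) (hq1 : ∀ i, q i ≤ 1)

noncomputable def VarE (q : ι → ℝ) (f : (ι → Bool) → ℝ) : ℝ :=
  EE q (fun co => (f co - EE q f) ^ 2)

def DD (i : ι) (f : (ι → Bool) → ℝ) : (ι → Bool) → ℝ :=
  fun co => f (Function.update co i true) - f (Function.update co i false)

noncomputable def gQ (q : ι → ℝ) (i : ι) (f : (ι → Bool) → ℝ) : (ι → Bool) → ℝ :=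
  fun co => q i * f (Function.update co i true) + (1 - q i) * f (Function.update co i false)

lemma VarE_eq (f : (ι → Bool) → ℝ) :
    VarE q f = EE q (fun co => f co ^ 2) - (EE q f) ^ 2 := by
  have hpt : (fun co => (f co - EE q f) ^ 2)
      = fun co => (f co ^ 2 - (2 * EE q f) * f co) + (EE q f) ^ 2 := by
    funext co; ring
  rw [VarE, hpt, EE_add, EE_sub, EE_smul, EE_const]
  ring

include hq0 hq1 in
lemma VarE_nonneg (f : (ι → Bool) → ℝ) : 0 ≤ VarE q f :=
  EE_nonneg hq0 hq1 (fun co => sq_nonneg _)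

lemma EE_gQ (i : ι) (f : (ι → Bool) → ℝ) : EE q (gQ q i f) = EE q f := by
  have : EE q (gQ q i f) = q i * EE q (fun co => f (Function.update co i true))
      + (1 - q i) * EE q (fun co => f (Function.update co i false)) := by
    rw [show gQ q i f = fun co => q i * f (Function.update co i true)
      + (1 - q i) * f (Function.update co i false) from rfl, EE_add, EE_smul, EE_smul]
  rw [this, ← EE_split]

lemma VarE_peel (i : ι) (f : (ι → Bool) → ℝ) :
    VarE q f = VarE q (gQ q i f) + q i * (1 - q i) * EE q (fun co => (DD i f co) ^ 2) := by
  have hA := EE_split (q := q) i (fun co => f co ^ 2)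
  set A := EE q (fun co => f (Function.update co i true) ^ 2) with hAdef
  set B := EE q (fun co => f (Function.update co i false) ^ 2) with hBdef
  set C := EE q (fun co => f (Function.update co i true) * f (Function.update co i false))
    with hCdef
  have hgsq : EE q (fun co => (gQ q i f co) ^ 2)
      = q i ^ 2 * A + 2 * (q i * (1 - q i)) * C + (1 - q i) ^ 2 * B := by
    have hpt : (fun co => (gQ q i f co) ^ 2)
        = fun co => q i ^ 2 * (f (Function.update co i true) ^ 2)
          + (2 * (q i * (1 - q i)) * (f (Function.update co i true) * f (Function.update co i false))
            + (1 - q i) ^ 2 * (f (Function.update co i false) ^ 2)) := by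
      funext co
      show (q i * f (Function.update co i true) + (1 - q i) * f (Function.update co i false)) ^ 2 = _
      ring
    rw [hpt, EE_add, EE_add, EE_smul, EE_smul, EE_smul, ← hAdef, ← hBdef, ← hCdef]
    ring
  have hDsq : EE q (fun co => (DD i f co) ^ 2) = A - 2 * C + B := by
    have hpt : (fun co => (DD i f co) ^ 2)
        = fun co => (f (Function.update co i true) ^ 2 - 2 * (f (Function.update co i true) * f (Function.update co i false)))
            + f (Function.update co i false) ^ 2 := by
      funext co
      show (f (Function.update co i true) - f (Function.update co i false)) ^ 2 = _
      ring
    rw [hpt, EE_add, EE_sub, EE_smul, ← hAdef, ← hBdef, ← hCdef]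
  rw [VarE_eq, VarE_eq, EE_gQ, hgsq, hDsq, hA]
  ring

-- dependence on a set of coordinates
def Dep (s : Finset ι) (f : (ι → Bool) → ℝ) : Prop :=
  ∀ co co' : ι → Bool, (∀ j ∈ s, co j = co' j) → f co = f co'

lemma VarE_const (c : ℝ) : VarE q (fun _ => c) = 0 := by
  rw [VarE, EE_const, EE_const]
  ring

lemma Dep_const {f : (ι → Bool) → ℝ} (h : Dep (∅ : Finset ι) f) :
    f = fun _ => f (fun _ => false) := by
  funext co
  exact h co (fun _ => false) (by simp)

lemma Dep_gQ {L : Finset ι} {i : ι} {f : (ι → Bool) → ℝ} (h : Dep (insert i L) f) :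
    Dep L (gQ q i f) := by
  intro co co' hagree
  have h1 : ∀ b, f (Function.update co i b) = f (Function.update co' i b) := by
    intro b
    apply h
    intro j hj
    rcases Finset.mem_insert.mp hj with rfl | hj
    · simp
    · by_cases hji : j = i
      · subst hji; simp
      · rw [Function.update_of_ne hji, Function.update_of_ne hji]
        exact hagree j hj
  show _ = _
  rw [show gQ q i f co = q i * f (Function.update co i true)
    + (1 - q i) * f (Function.update co i false) from rfl,
    show gQ q i f co' = q i * f (Function.update co' i true)
    + (1 - q i) * f (Function.update co' i false) from rfl, h1 true, h1 false]

lemma DD_gQ_comm {i j : ι} (hij : j ≠ i) (f : (ι → Bool) → ℝ) :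
    DD j (gQ q i f) = gQ q i (DD j f) := by
  funext co
  show gQ q i f (Function.update co j true) - gQ q i f (Function.update co j false) = _
  show _ = q i * DD j f (Function.update co i true) + (1 - q i) * DD j f (Function.update co i false)
  simp only [gQ, DD]
  simp only [Function.update_comm hij]
  ring

include hq0 hq1 in
lemma ES_lite (c : ℝ) (L : Finset ι) :
    ∀ f : (ι → Bool) → ℝ, Dep L f → (∀ i ∈ L, ∀ co, 0 ≤ DD i f co) →
    (∀ i ∈ L, ∀ co, DD i f co ≤ c) →
    VarE q f ≤ c * ∑ i ∈ L, q i * EE q (DD i f) := by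
  classical
  induction L using Finset.induction_on with
  | empty =>
      intro f hdep _ _
      rw [Dep_const hdep, VarE_const]
      simp
  | @insert i L hiL ih =>
      intro f hdep hDnn hDle
      have hiI : i ∈ insert i L := Finset.mem_insert_self i L
      have hquad : q i * (1 - q i) * EE q (fun co => (DD i f co) ^ 2)
          ≤ c * (q i * EE q (DD i f)) := by
        have h1 : EE q (fun co => (DD i f co) ^ 2) ≤ EE q (fun co => c * DD i f co) := by
          apply EE_mono hq0 hq1
          intro co
          nlinarith [hDnn i hiI co, hDle i hiI co]
        have h2 : EE q (fun co => c * DD i f co) = c * EE q (DD i f) := EE_smul c _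
        have h3 : 0 ≤ EE q (fun co => (DD i f co) ^ 2) :=
          EE_nonneg hq0 hq1 (fun co => sq_nonneg _)
        have h4 : q i * (1 - q i) ≤ q i := by nlinarith [hq0 i, hq1 i]
        calc q i * (1 - q i) * EE q (fun co => (DD i f co) ^ 2)
            ≤ q i * EE q (fun co => (DD i f co) ^ 2) := by
              apply mul_le_mul_of_nonneg_right h4 h3
          _ ≤ q i * (c * EE q (DD i f)) := by
              apply mul_le_mul_of_nonneg_left (h1.trans_eq h2) (hq0 i)
          _ = c * (q i * EE q (DD i f)) := by ring
      have hrec : VarE q (gQ q i f) ≤ c * ∑ j ∈ L, q j * EE q (DD j f) := by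
        have := ih (gQ q i f) (Dep_gQ hdep)
          (by
            intro j hj co
            rw [DD_gQ_comm (by rintro rfl; exact hiL hj) f]
            have := hDnn j (Finset.mem_insert_of_mem hj)
            have h1 := this (Function.update co i true)
            have h2 := this (Function.update co i false)
            have := hq0 i; have := hq1 i
            show 0 ≤ q i * DD j f (Function.update co i true)
              + (1 - q i) * DD j f (Function.update co i false)
            nlinarith)
          (by
            intro j hj co
            rw [DD_gQ_comm (by rintro rfl; exact hiL hj) f]
            have := hDle j (Finset.mem_insert_of_mem hj)
            have h1 := this (Function.update co i true)
            have h2 := this (Function.update co i false)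
            have := hq0 i; have := hq1 i
            show q i * DD j f (Function.update co i true)
              + (1 - q i) * DD j f (Function.update co i false) ≤ c
            nlinarith)
        refine this.trans (le_of_eq ?_)
        congr 1
        apply Finset.sum_congr rfl
        intro j hj
        rw [DD_gQ_comm (by rintro rfl; exact hiL hj) f, EE_gQ]
      calc VarE q f = VarE q (gQ q i f) + q i * (1 - q i) * EE q (fun co => (DD i f co) ^ 2) :=
            VarE_peel i f
        _ ≤ c * ∑ j ∈ L, q j * EE q (DD j f) + c * (q i * EE q (DD i f)) := by
            exact add_le_add hrec hquad
        _ = c * ∑ j ∈ insert i L, q j * EE q (DD j f) := by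
            rw [Finset.sum_insert hiL]; ring
end Prob2

section Prob3
variable {ι : Type*} [Fintype ι] [DecidableEq ι]

def ov (co : ι → Bool) (s : Finset ι) (σ : ι → Bool) : ι → Bool :=
  fun j => if j ∈ s then σ j else co j

noncomputable def avg (q : ι → ℝ) (s : Finset ι) (f : (ι → Bool) → ℝ) : (ι → Bool) → ℝ :=
  fun co => EE q (fun σ => f (ov co s σ))

variable {q : ι → ℝ} (hq0 : ∀ i, 0 ≤ q i) (hq1 : ∀ i, q i ≤ 1)

lemma ov_empty (co σ : ι → Bool) : ov co ∅ σ = co := by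
  funext j; simp [ov]

lemma ov_insert {i : ι} {s : Finset ι} (his : i ∉ s) (co σ : ι → Bool) (b : Bool) :
    ov co (insert i s) (Function.update σ i b) = Function.update (ov co s σ) i b := by
  funext j
  by_cases hji : j = i
  · subst hji; simp [ov]
  · rw [Function.update_of_ne hji]
    simp only [ov, Finset.mem_insert, Function.update_of_ne hji]
    by_cases hjs : j ∈ s
    · simp [hjs, hji]
    · simp [hjs, hji]

lemma ov_update {i : ι} {s : Finset ι} (his : i ∉ s) (co σ : ι → Bool) (b : Bool) :
    ov (Function.update co i b) s σ = Function.update (ov co s σ) i b := by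
  funext j
  by_cases hji : j = i
  · subst hji; simp [ov, fun h => his h]
  · rw [Function.update_of_ne hji]
    simp only [ov, Function.update_of_ne hji]

lemma avg_empty (f : (ι → Bool) → ℝ) : avg q ∅ f = f := by
  funext co
  simp only [avg, ov_empty]
  exact EE_const _

lemma avg_insert {i : ι} {s : Finset ι} (his : i ∉ s) (f : (ι → Bool) → ℝ) :
    avg q (insert i s) f = avg q s (gQ q i f) := by
  funext co
  show EE q (fun σ => f (ov co (insert i s) σ)) = EE q (fun σ => gQ q i f (ov co s σ))
  rw [EE_split i (fun σ => f (ov co (insert i s) σ))]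
  have e1 : (fun σ => f (ov co (insert i s) (Function.update σ i true)))
      = fun σ => f (Function.update (ov co s σ) i true) := by
    funext σ; rw [ov_insert his]
  have e2 : (fun σ => f (ov co (insert i s) (Function.update σ i false)))
      = fun σ => f (Function.update (ov co s σ) i false) := by
    funext σ; rw [ov_insert his]
  rw [e1, e2]
  have e3 : (fun σ => gQ q i f (ov co s σ))
      = fun σ => q i * f (Function.update (ov co s σ) i true)
        + (1 - q i) * f (Function.update (ov co s σ) i false) := rfl
  rw [e3, EE_add, EE_smul, EE_smul]

lemma EE_avg (s : Finset ι) (f : (ι → Bool) → ℝ) : EE q (avg q s f) = EE q f := by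
  classical
  induction s using Finset.induction_on generalizing f with
  | empty => rw [avg_empty]
  | @insert i s his ih => rw [avg_insert his, ih, EE_gQ]

include hq0 hq1 in
lemma avg_mono {f g : (ι → Bool) → ℝ} (h : ∀ co, f co ≤ g co) (s : Finset ι) (co : ι → Bool) :
    avg q s f co ≤ avg q s g co :=
  EE_mono hq0 hq1 (fun σ => h (ov co s σ))

include hq0 hq1 in
lemma avg_nonneg {f : (ι → Bool) → ℝ} (h : ∀ co, 0 ≤ f co) (s : Finset ι) (co : ι → Bool) :
    0 ≤ avg q s f co :=
  EE_nonneg hq0 hq1 (fun σ => h (ov co s σ))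

lemma avg_finsum {α : Type*} (u : Finset α) (F : α → (ι → Bool) → ℝ) (s : Finset ι)
    (co : ι → Bool) :
    avg q s (fun c => ∑ a ∈ u, F a c) co = ∑ a ∈ u, avg q s (F a) co :=
  EE_finsum u (fun a σ => F a (ov co s σ))

lemma avg_of_dep {s : Finset ι} {f : (ι → Bool) → ℝ} (h : Dep s f) (co : ι → Bool) :
    avg q s f co = EE q f := by
  show EE q (fun σ => f (ov co s σ)) = EE q f
  congr 1
  funext σ
  exact h _ σ (fun j hj => by simp [ov, hj])

lemma avg_update {i : ι} {s : Finset ι} (his : i ∉ s) (f : (ι → Bool) → ℝ) (co : ι → Bool)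
    (b : Bool) :
    avg q s f (Function.update co i b) = avg q s (fun c => f (Function.update c i b)) co := by
  show EE q (fun σ => f (ov (Function.update co i b) s σ)) = _
  congr 1
  funext σ
  rw [ov_update his]

lemma DD_avg {i : ι} {s : Finset ι} (his : i ∉ s) (f : (ι → Bool) → ℝ) :
    DD i (avg q s f) = avg q s (DD i f) := by
  funext co
  show avg q s f (Function.update co i true) - avg q s f (Function.update co i false) = _
  rw [avg_update his, avg_update his]
  exact (EE_sub _ _).symm

lemma Dep_avg (s : Finset ι) (f : (ι → Bool) → ℝ) : Dep sᶜ (avg q s f) := by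
  intro co co' hagree
  show EE q (fun σ => f (ov co s σ)) = EE q (fun σ => f (ov co' s σ))
  congr 1
  funext σ
  congr 1
  funext j
  by_cases hjs : j ∈ s
  · simp [ov, hjs]
  · simp only [ov, hjs, if_false]
    exact hagree j (Finset.mem_compl.mpr hjs)

lemma ov_compl (co σ : ι → Bool) (s : Finset ι) : ov co s σ = ov σ sᶜ co := by
  funext j
  by_cases hjs : j ∈ s <;> simp [ov, hjs]

lemma avg_tower (s : Finset ι) (g : (ι → Bool) → ℝ) :
    ∑ σ : ι → Bool, coinWeight q σ * EE q (fun co => g (ov co s σ)) = EE q g := by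
  have h1 : ∀ σ : ι → Bool, coinWeight q σ * EE q (fun co => g (ov co s σ))
      = ∑ co : ι → Bool, coinWeight q σ * (coinWeight q co * g (ov co s σ)) := by
    intro σ
    rw [EE, Finset.mul_sum]
  rw [Finset.sum_congr rfl (fun σ _ => h1 σ), Finset.sum_comm]
  have h2 : ∀ co : ι → Bool, ∑ σ : ι → Bool, coinWeight q σ * (coinWeight q co * g (ov co s σ))
      = coinWeight q co * avg q s g co := by
    intro co
    rw [avg, EE, Finset.mul_sum]
    apply Finset.sum_congr rfl
    intros; ring
  rw [Finset.sum_congr rfl (fun co _ => h2 co)]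
  exact EE_avg s g

-- total variance decomposition
lemma VarE_mixture (s : Finset ι) (f : (ι → Bool) → ℝ) :
    VarE q f = VarE q (avg q sᶜ f)
      + ∑ σ : ι → Bool, coinWeight q σ * VarE q (fun co => f (ov co s σ)) := by
  have hm : ∀ σ : ι → Bool, EE q (fun co => f (ov co s σ)) = avg q sᶜ f σ := by
    intro σ
    show _ = EE q (fun co => f (ov σ sᶜ co))
    congr 1
    funext co
    rw [ov_compl]
  have hsq : ∑ σ : ι → Bool, coinWeight q σ * EE q (fun co => (f (ov co s σ)) ^ 2)
      = EE q (fun co => f co ^ 2) := avg_tower s (fun co => f co ^ 2)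
  have hexp : ∑ σ : ι → Bool, coinWeight q σ * VarE q (fun co => f (ov co s σ))
      = EE q (fun co => f co ^ 2) - EE q (fun σ => (avg q sᶜ f σ) ^ 2) := by
    have h3 : ∀ σ : ι → Bool, VarE q (fun co => f (ov co s σ))
        = EE q (fun co => (f (ov co s σ)) ^ 2) - (avg q sᶜ f σ) ^ 2 := by
      intro σ
      rw [VarE_eq, hm σ]
    rw [Finset.sum_congr rfl (fun σ _ => by rw [h3 σ, mul_sub])]
    rw [Finset.sum_sub_distrib, hsq]
    rfl
  have hEm : EE q (avg q sᶜ f) = EE q f := EE_avg _ f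
  rw [hexp, VarE_eq, VarE_eq, hEm]
  ring
end Prob3

section Model
variable {V : Type*} [Fintype V] [DecidableEq V] {ι : Type*} [Fintype ι] [DecidableEq ι]

def grpR (grp : ι → Finset (V × V)) (J : Finset ι) : ι → Finset (V × V) :=
  fun i => if i ∈ J then grp i else ∅

def hd (grp : ι → Finset (V × V)) (i : ι) : Finset V := (grp i).image Prod.snd

noncomputable def XF (grp : ι → Finset (V × V)) (H : Finset V → ℝ) (J : Finset ι)
    (S : Finset V) (t : ℕ) : (ι → Bool) → ℝ :=
  fun co => H (ereach (liveOf (grpR grp J) co) S t)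

lemma grpR_univ (grp : ι → Finset (V × V)) : grpR grp Finset.univ = grp := by
  funext i; simp [grpR]

lemma liveOf_mono {g1 g2 : ι → Finset (V × V)} (h : ∀ i, g1 i ⊆ g2 i) (co : ι → Bool) :
    liveOf g1 co ⊆ liveOf g2 co := by
  intro e he
  rw [liveOf, Finset.mem_biUnion] at he ⊢
  obtain ⟨i, hi, hei⟩ := he
  refine ⟨i, hi, ?_⟩
  by_cases hco : co i
  · simp only [hco, if_true] at hei ⊢
    exact h i hei
  · simp only [hco] at hei ⊢
    simpa using hei

lemma liveOf_congr {g : ι → Finset (V × V)} {co co' : ι → Bool}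
    (h : ∀ j, g j ≠ ∅ → co j = co' j) : liveOf g co = liveOf g co' := by
  rw [liveOf, liveOf]
  apply Finset.biUnion_congr rfl
  intro j _
  by_cases hj : g j = ∅
  · rw [hj]; simp
  · rw [h j hj]

lemma mem_liveOf {g : ι → Finset (V × V)} {co : ι → Bool} {e : V × V} :
    e ∈ liveOf g co ↔ ∃ j, co j = true ∧ e ∈ g j := by
  rw [liveOf, Finset.mem_biUnion]
  constructor
  · rintro ⟨j, _, hej⟩
    by_cases hco : co j
    · simp only [hco, if_true] at hej
      exact ⟨j, hco, hej⟩
    · simp only [hco] at hej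
      simp at hej
  · rintro ⟨j, hco, hej⟩
    exact ⟨j, Finset.mem_univ j, by simp [hco, hej]⟩

variable {grp : ι → Finset (V × V)} (htail : ∀ i, ∃ t : V, ∀ e ∈ grp i, e.1 = t)

-- the stage-one groups
variable (grp) in
def stg (J : Finset ι) (S : Finset V) : Finset ι :=
  J.filter (fun i => ∃ e ∈ grp i, e.1 ∈ S)

include htail in
lemma liveOf_filter_eq (J : Finset ι) (S : Finset V) (co : ι → Bool) :
    (liveOf (grpR grp J) co).filter (fun e => e.1 ∉ S)
      = liveOf (grpR grp (J \ stg grp J S)) co := by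
  ext e
  rw [Finset.mem_filter, mem_liveOf, mem_liveOf]
  constructor
  · rintro ⟨⟨j, hco, hej⟩, hes⟩
    refine ⟨j, hco, ?_⟩
    rw [grpR] at hej
    by_cases hjJ : j ∈ J
    · simp only [hjJ, if_true] at hej
      have hjstg : j ∉ stg grp J S := by
        intro hstg
        rw [stg, Finset.mem_filter] at hstg
        obtain ⟨e', he', he's⟩ := hstg.2
        obtain ⟨t0, ht0⟩ := htail j
        rw [ht0 e hej] at hes
        rw [ht0 e' he'] at he's
        exact hes he's
      rw [grpR, if_pos (Finset.mem_sdiff.mpr ⟨hjJ, hjstg⟩)]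
      exact hej
    · simp only [hjJ, if_false] at hej
      simp at hej
  · rintro ⟨j, hco, hej⟩
    rw [grpR] at hej
    by_cases hjJ : j ∈ J \ stg grp J S
    · simp only [hjJ, if_true] at hej
      rw [Finset.mem_sdiff] at hjJ
      constructor
      · exact ⟨j, hco, by rw [grpR, if_pos hjJ.1]; exact hej⟩
      · intro hes
        apply hjJ.2
        rw [stg, Finset.mem_filter]
        exact ⟨hjJ.1, e, hej, hes⟩
    · simp only [hjJ, if_false] at hej
      simp at hej

include htail in
lemma estep_liveOf_eq (J : Finset ι) (S : Finset V) (co : ι → Bool) :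
    estep (liveOf (grpR grp J) co) S
      = S ∪ ((stg grp J S).filter (fun i => co i = true)).biUnion (hd grp) := by
  ext v
  rw [estep, Finset.mem_union, Finset.mem_union, Finset.mem_filter]
  constructor
  · rintro (hv | ⟨_, u, hu, hedge⟩)
    · exact Or.inl hv
    · rw [mem_liveOf] at hedge
      obtain ⟨j, hco, hej⟩ := hedge
      rw [grpR] at hej
      by_cases hjJ : j ∈ J
      · simp only [hjJ, if_true] at hej
        refine Or.inr (Finset.mem_biUnion.mpr ⟨j, ?_, ?_⟩)
        · rw [Finset.mem_filter, stg, Finset.mem_filter]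
          exact ⟨⟨hjJ, (u, v), hej, hu⟩, hco⟩
        · rw [hd, Finset.mem_image]
          exact ⟨(u, v), hej, rfl⟩
      · simp only [hjJ, if_false] at hej
        simp at hej
  · rintro (hv | hv)
    · exact Or.inl hv
    · rw [Finset.mem_biUnion] at hv
      obtain ⟨j, hj, hvj⟩ := hv
      rw [Finset.mem_filter, stg, Finset.mem_filter] at hj
      obtain ⟨⟨hjJ, e', he', he's⟩, hco⟩ := hj
      rw [hd, Finset.mem_image] at hvj
      obtain ⟨e, he, rfl⟩ := hvj
      obtain ⟨t0, ht0⟩ := htail j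
      refine Or.inr ⟨Finset.mem_univ _, ⟨e.1, ?_, ?_⟩⟩
      · rw [ht0 e he, ← ht0 e' he']
        exact he's
      · rw [mem_liveOf]
        exact ⟨j, hco, by rw [grpR, if_pos hjJ]; exact he⟩

-- master rewrite for XF at t+1
include htail in
lemma XF_succ (J : Finset ι) (S : Finset V) (t : ℕ) (H : Finset V → ℝ) (co : ι → Bool) :
    XF grp H J S (t + 1) co
      = H (ereach (liveOf (grpR grp (J \ stg grp J S)) co)
          (S ∪ ((stg grp J S).filter (fun i => co i = true)).biUnion (hd grp)) t) := by
  rw [XF, ereach_succ_master, liveOf_filter_eq htail, estep_liveOf_eq htail]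
end Model

section Main
variable {V : Type*} [Fintype V] [DecidableEq V] {ι : Type*} [Fintype ι] [DecidableEq ι]
variable {grp : ι → Finset (V × V)} {q : ι → ℝ} {H : Finset V → ℝ} {b : ℕ} {τ : ℕ} {K : ℝ}
variable (hq0 : ∀ i, 0 ≤ q i) (hq1 : ∀ i, q i ≤ 1)
variable (hH0 : H ∅ = 0) (hHnn : ∀ S, 0 ≤ H S)
variable (hHmono : MonotoneFn H) (hHsub : SubmodularFn H)
variable (htail : ∀ i, ∃ t : V, ∀ e ∈ grp i, e.1 = t)
variable (hcard : ∀ i, (grp i).card ≤ b)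
variable (hK0 : 0 ≤ K)
variable (hK : ∀ (J : Finset ι) (t : ℕ), t ≤ τ → ∀ v : V, bInfl (grpR grp J) q H t {v} ≤ K)

include hq0 hq1 hH0 hHnn hHmono hHsub htail hcard hK0 hK in
lemma main_ind : ∀ (t : ℕ), t ≤ τ → ∀ (J : Finset ι) (S : Finset V),
    VarE q (XF grp H J S t) ≤ (b : ℝ) * t * K * EE q (XF grp H J S t) := by
  intro t
  induction t with
  | zero =>
      intro _ J S
      have h0 : XF grp H J S 0 = fun _ => H S := rfl
      rw [h0, VarE_const]
      simp
  | succ t ih =>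
      intro ht J S
      have htt : t ≤ τ := le_trans (Nat.le_succ t) ht
      set S₁ := stg grp J S with hS₁def
      set J' := J \ S₁ with hJ'def
      set f := XF grp H J S (t + 1) with hfdef
      set E' : (ι → Bool) → Finset (V × V) := fun co => liveOf (grpR grp J') co with hE'def
      have KR : ∀ co, f co
          = H (ereach (E' co) (S ∪ (S₁.filter (fun i => co i = true)).biUnion (hd grp)) t) :=
        fun co => XF_succ htail J S t H co
      -- E' ignores coins in S₁
      have hE'congr : ∀ (co co' : ι → Bool), (∀ j, j ∉ S₁ → co j = co' j) → E' co = E' co' := by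
        intro co co' hcc
        apply liveOf_congr
        intro j hne
        have hjJ' : j ∈ J' := by
          by_contra hj
          rw [grpR, if_neg hj] at hne
          exact hne rfl
        exact hcc j (fun hjs => (Finset.mem_sdiff.mp hjJ').2 hjs)
      have hE'up : ∀ (co : ι → Bool) (i : ι) (bb : Bool), i ∈ S₁ →
          E' (Function.update co i bb) = E' co := by
        intro co i bb hi
        apply hE'congr
        intro j hj
        have hji : j ≠ i := by intro h; subst h; exact hj hi
        exact Function.update_of_ne hji _ _
      have hE'ov : ∀ (co σ : ι → Bool), E' (ov co S₁ σ) = E' co := by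
        intro co σ
        apply hE'congr
        intro j hj
        simp [ov, hj]
      -- filter facts
      have hfiltT : ∀ (co : ι → Bool) (i : ι), i ∈ S₁ →
          S₁.filter (fun j => (Function.update co i true) j = true)
            = insert i (S₁.filter (fun j => (Function.update co i false) j = true)) := by
        intro co i hi
        ext j
        simp only [Finset.mem_filter, Finset.mem_insert]
        by_cases hji : j = i
        · subst hji
          simp [hi]
        · rw [Function.update_of_ne hji, Function.update_of_ne hji]
          constructor
          · rintro ⟨h1, h2⟩; exact Or.inr ⟨h1, h2⟩
          · rintro (h | ⟨h1, h2⟩)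
            · exact absurd h hji
            · exact ⟨h1, h2⟩
      have hfiltF : ∀ (co : ι → Bool) (i : ι), i ∈ S₁ → co i = true →
          S₁.filter (fun j => (Function.update co i false) j = true)
            = (S₁.filter (fun j => co j = true)).erase i := by
        intro co i _ _
        ext j
        simp only [Finset.mem_filter, Finset.mem_erase]
        by_cases hji : j = i
        · subst hji
          simp
        · rw [Function.update_of_ne hji]
          constructor
          · rintro ⟨h1, h2⟩; exact ⟨hji, h1, h2⟩
          · rintro ⟨_, h1, h2⟩; exact ⟨h1, h2⟩
      have hfiltOv : ∀ (co σ : ι → Bool),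
          S₁.filter (fun j => (ov co S₁ σ) j = true) = S₁.filter (fun j => σ j = true) := by
        intro co σ
        apply Finset.filter_congr
        intro j hj
        simp [ov, hj]
      -- single-node spread functions
      set W : V → (ι → Bool) → ℝ := fun v co => H (ereach (E' co) {v} t) with hWdef
      have hWdep : ∀ v : V, Dep S₁ᶜ (W v) := by
        intro v co co' hcc
        have : E' co = E' co' := by
          apply hE'congr
          intro j hj
          exact hcc j (Finset.mem_compl.mpr hj)
        simp only [hWdef, this]
      have hWinfl : ∀ v : V, EE q (W v) = bInfl (grpR grp J') q H t {v} := fun v => rfl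
      -- O1: bounds on single-coin differences of f
      have hDnn : ∀ i ∈ S₁, ∀ co, 0 ≤ DD i f co := by
        intro i hi co
        rw [DD, KR, KR, hE'up co i true hi, hE'up co i false hi, hfiltT co i hi,
          Finset.biUnion_insert]
        rw [sub_nonneg]
        apply hHmono
        apply ereach_mono_seed
        intro x hx
        rcases Finset.mem_union.mp hx with hx | hx
        · exact Finset.mem_union_left _ hx
        · exact Finset.mem_union_right _ (Finset.mem_union_right _ hx)
      have hDle : ∀ i ∈ S₁, ∀ co, DD i f co ≤ ∑ v ∈ hd grp i, W v co := by
        intro i hi co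
        rw [DD, KR, KR, hE'up co i true hi, hE'up co i false hi, hfiltT co i hi,
          Finset.biUnion_insert]
        have hseed : S ∪ (hd grp i ∪ (S₁.filter (fun j => (Function.update co i false) j = true)).biUnion (hd grp))
            = (S ∪ (S₁.filter (fun j => (Function.update co i false) j = true)).biUnion (hd grp)) ∪ hd grp i := by
          rw [Finset.union_comm (hd grp i), ← Finset.union_assoc]
        rw [hseed, ereach_union_seed]
        have hhd : ereach (E' co) (hd grp i) t
            = (hd grp i).biUnion (fun v => ereach (E' co) {v} t) := by
          have h1 : hd grp i = (hd grp i).biUnion (fun v => ({v} : Finset V)) := by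
            simp
          conv_lhs => rw [h1]
          exact ereach_biUnion_seed _ _ _ _
        rw [hhd]
        exact submod_biUnion_le hH0 hHmono hHsub _ _ _
      -- conditional expectation m
      set m := avg q S₁ᶜ f with hmdef
      have hmix := VarE_mixture (q := q) S₁ f
      -- IH part
      have hform : ∀ σ : ι → Bool, (fun co => f (ov co S₁ σ))
          = XF grp H J' (S ∪ ((S₁.filter (fun i => σ i = true)).biUnion (hd grp))) t := by
        intro σ
        funext co
        rw [KR, hE'ov, hfiltOv]
        rfl
      have hIHsum : ∑ σ : ι → Bool, coinWeight q σ * VarE q (fun co => f (ov co S₁ σ))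
          ≤ (b : ℝ) * t * K * EE q f := by
        have h1 : ∀ σ : ι → Bool, coinWeight q σ * VarE q (fun co => f (ov co S₁ σ))
            ≤ coinWeight q σ * ((b : ℝ) * t * K * EE q (fun co => f (ov co S₁ σ))) := by
          intro σ
          apply mul_le_mul_of_nonneg_left _ (coinWeight_nonneg hq0 hq1 σ)
          rw [hform σ]
          exact ih htt J' _
        calc ∑ σ : ι → Bool, coinWeight q σ * VarE q (fun co => f (ov co S₁ σ))
            ≤ ∑ σ : ι → Bool, coinWeight q σ * ((b : ℝ) * t * K * EE q (fun co => f (ov co S₁ σ))) :=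
              Finset.sum_le_sum (fun σ _ => h1 σ)
          _ = (b : ℝ) * t * K * ∑ σ : ι → Bool, coinWeight q σ * EE q (fun co => f (ov co S₁ σ)) := by
              rw [Finset.mul_sum]
              apply Finset.sum_congr rfl
              intros; ring
          _ = (b : ℝ) * t * K * EE q f := by rw [avg_tower]
      -- ES part on m
      have hDepm : Dep S₁ m := by
        have := Dep_avg (q := q) S₁ᶜ f
        rwa [compl_compl] at this
      have hinotc : ∀ i ∈ S₁, i ∉ S₁ᶜ := fun i hi hc => (Finset.mem_compl.mp hc) hi
      have hDm : ∀ i ∈ S₁, DD i m = avg q S₁ᶜ (DD i f) := by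
        intro i hi
        exact DD_avg (hinotc i hi) f
      have hDmnn : ∀ i ∈ S₁, ∀ co, 0 ≤ DD i m co := by
        intro i hi co
        rw [hDm i hi]
        exact avg_nonneg hq0 hq1 (hDnn i hi) _ _
      have hDmle : ∀ i ∈ S₁, ∀ co, DD i m co ≤ (b : ℝ) * K := by
        intro i hi co
        rw [hDm i hi]
        calc avg q S₁ᶜ (DD i f) co ≤ avg q S₁ᶜ (fun c => ∑ v ∈ hd grp i, W v c) co :=
              avg_mono hq0 hq1 (hDle i hi) _ _
          _ = ∑ v ∈ hd grp i, avg q S₁ᶜ (W v) co := avg_finsum _ _ _ _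
          _ = ∑ v ∈ hd grp i, EE q (W v) := by
              apply Finset.sum_congr rfl
              intro v _
              exact avg_of_dep (hWdep v) co
          _ ≤ ∑ v ∈ hd grp i, K := by
              apply Finset.sum_le_sum
              intro v _
              rw [hWinfl v]
              exact hK J' t htt v
          _ = ((hd grp i).card : ℝ) * K := by
              rw [Finset.sum_const, nsmul_eq_mul]
          _ ≤ (b : ℝ) * K := by
              apply mul_le_mul_of_nonneg_right _ hK0
              have h1 : (hd grp i).card ≤ b := le_trans (Finset.card_image_le) (hcard i)
              exact_mod_cast h1
      have hES : VarE q m ≤ ((b : ℝ) * K) * ∑ i ∈ S₁, q i * EE q (DD i m) :=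
        ES_lite hq0 hq1 ((b : ℝ) * K) S₁ m hDepm hDmnn hDmle
      have hEEDm : ∀ i ∈ S₁, EE q (DD i m) = EE q (DD i f) := by
        intro i hi
        rw [hDm i hi, EE_avg]
      -- O2 : self-bounding
      have hself : ∑ i ∈ S₁, q i * EE q (DD i f) ≤ EE q f := by
        set φ : ι → (ι → Bool) → ℝ :=
          fun i co => if co i = true then f co - f (Function.update co i false) else 0 with hφdef
        have hφi : ∀ i : ι, q i * EE q (DD i f) = EE q (φ i) := by
          intro i
          have e1 : (fun co => φ i (Function.update co i true)) = DD i f := by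
            funext co
            simp only [hφdef, Function.update_self, if_true, DD, Function.update_idem]
          have e2 : (fun co => φ i (Function.update co i false)) = fun _ => (0 : ℝ) := by
            funext co
            simp only [hφdef, Function.update_self]
            simp
          rw [EE_split i (φ i), e1, e2, EE_const, mul_zero, add_zero]
        have hsum : ∑ i ∈ S₁, EE q (φ i) = EE q (fun co => ∑ i ∈ S₁, φ i co) :=
          (EE_finsum S₁ φ).symm
        have hpt : ∀ co, ∑ i ∈ S₁, φ i co ≤ f co := by
          intro co
          have e3 : ∑ i ∈ S₁, φ i co
              = ∑ i ∈ S₁.filter (fun i => co i = true), (f co - f (Function.update co i false)) := by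
            rw [Finset.sum_filter]
          rw [e3]
          set Live := S₁.filter (fun i => co i = true) with hLive
          set B := ereach (E' co) S t with hB
          set P : ι → Finset V := fun k => ereach (E' co) (hd grp k) t with hP
          have hfco : f co = H (B ∪ Live.biUnion P) := by
            rw [KR, ereach_union_seed, ereach_biUnion_seed]
          have hfi : ∀ i ∈ Live, f (Function.update co i false) = H (B ∪ (Live.erase i).biUnion P) := by
            intro i hiL
            have hiS : i ∈ S₁ := (Finset.mem_filter.mp hiL).1
            have hico : co i = true := (Finset.mem_filter.mp hiL).2
            rw [KR, hE'up co i false hiS, hfiltF co i hiS hico, ← hLive,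
              ereach_union_seed, ereach_biUnion_seed]
          have e4 : ∑ i ∈ Live, (f co - f (Function.update co i false))
              = ∑ i ∈ Live, (H (B ∪ Live.biUnion P) - H (B ∪ (Live.erase i).biUnion P)) := by
            apply Finset.sum_congr rfl
            intro i hiL
            rw [hfco, hfi i hiL]
          rw [e4]
          calc ∑ i ∈ Live, (H (B ∪ Live.biUnion P) - H (B ∪ (Live.erase i).biUnion P))
              ≤ H (B ∪ Live.biUnion P) - H B := submod_erase_sum_le hHmono hHsub B Live P
            _ ≤ f co := by
                rw [hfco]
                have := hHnn B
                linarith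
        calc ∑ i ∈ S₁, q i * EE q (DD i f) = ∑ i ∈ S₁, EE q (φ i) := by
              apply Finset.sum_congr rfl
              intro i _
              exact hφi i
          _ = EE q (fun co => ∑ i ∈ S₁, φ i co) := hsum
          _ ≤ EE q f := EE_mono hq0 hq1 hpt
      -- assemble
      have hVarm : VarE q m ≤ ((b : ℝ) * K) * EE q f := by
        have h1 : ∑ i ∈ S₁, q i * EE q (DD i m) = ∑ i ∈ S₁, q i * EE q (DD i f) := by
          apply Finset.sum_congr rfl
          intro i hi
          rw [hEEDm i hi]
        have hbK : 0 ≤ (b : ℝ) * K := mul_nonneg (Nat.cast_nonneg b) hK0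
        calc VarE q m ≤ ((b : ℝ) * K) * ∑ i ∈ S₁, q i * EE q (DD i m) := hES
          _ = ((b : ℝ) * K) * ∑ i ∈ S₁, q i * EE q (DD i f) := by rw [h1]
          _ ≤ ((b : ℝ) * K) * EE q f := mul_le_mul_of_nonneg_left hself hbK
      have hfinal : VarE q f ≤ (b : ℝ) * t * K * EE q f + ((b : ℝ) * K) * EE q f := by
        rw [hmix]
        have := add_le_add hVarm hIHsum
        linarith
      calc VarE q f ≤ (b : ℝ) * t * K * EE q f + ((b : ℝ) * K) * EE q f := hfinal
        _ = (b : ℝ) * ((t : ℝ) + 1) * K * EE q f := by ring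
        _ = (b : ℝ) * ((t + 1 : ℕ) : ℝ) * K * EE q f := by push_cast; ring
end Main

section FinalAux
variable {V : Type*} [Fintype V] [DecidableEq V] {ι : Type*} [Fintype ι] [DecidableEq ι]

lemma bInfl_nonneg {grp : ι → Finset (V × V)} {q : ι → ℝ} {H : Finset V → ℝ}
    (hq0 : ∀ i, 0 ≤ q i) (hq1 : ∀ i, q i ≤ 1) (hHnn : ∀ S, 0 ≤ H S) (t : ℕ) (S : Finset V) :
    0 ≤ bInfl grp q H t S := by
  apply Finset.sum_nonneg
  intro co _
  exact mul_nonneg (coinWeight_nonneg hq0 hq1 co) (hHnn _)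

lemma bInfl_sub_le {grp : ι → Finset (V × V)} {q : ι → ℝ} {H : Finset V → ℝ}
    (hq0 : ∀ i, 0 ≤ q i) (hq1 : ∀ i, q i ≤ 1) (hHmono : MonotoneFn H)
    (J : Finset ι) {t τ : ℕ} (htτ : t ≤ τ) (S : Finset V) :
    bInfl (grpR grp J) q H t S ≤ bInfl grp q H τ S := by
  apply Finset.sum_le_sum
  intro co _
  apply mul_le_mul_of_nonneg_left _ (coinWeight_nonneg hq0 hq1 co)
  apply hHmono
  refine Finset.Subset.trans (ereach_mono_edges ?_ S t) (ereach_mono_steps _ _ htτ)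
  apply liveOf_mono
  intro i
  rw [grpR]
  by_cases h : i ∈ J
  · rw [if_pos h]
  · rw [if_neg h]
    exact Finset.empty_subset _

end FinalAux

/-- **Variance bound for live-edge models with `b`-dependence.**  If the edges of
`𝓔` are partitioned into mutually independent all-or-nothing groups `grp i`, each
of at most `b` edges sharing the same tail node, then for every `τ ≥ 1` and every
`T ⊆ V`, `Var[R^τ(T)] ≤ 2·b·τ·I^τ(T)·max{I^τ(T), max_v I^τ({v})}`. -/
theorem bdependence_variance_bound
    (𝓔 : Finset (V × V)) (grp : ι → Finset (V × V)) (b : ℕ) (hb : 1 ≤ b)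
    (hdisj : ∀ i j, i ≠ j → Disjoint (grp i) (grp j))
    (hcover : Finset.univ.biUnion grp = 𝓔)
    (hcard : ∀ i, (grp i).card ≤ b)
    (htail : ∀ i, ∃ t : V, ∀ e ∈ grp i, e.1 = t)
    (q : ι → ℝ) (hq0 : ∀ i, 0 ≤ q i) (hq1 : ∀ i, q i ≤ 1)
    (H : Finset V → ℝ) (hH0 : H ∅ = 0) (hHnn : ∀ S, 0 ≤ H S)
    (hHmono : MonotoneFn H) (hHsub : SubmodularFn H)
    (τ : ℕ) (hτ : 1 ≤ τ) (T : Finset V) :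
    bVar grp q H τ T ≤
      2 * (b : ℝ) * (τ : ℝ) * bInfl grp q H τ T *
        max (bInfl grp q H τ T) (⨆ v : V, bInfl grp q H τ {v}) := by
  rcases isEmpty_or_nonempty V with hV | hV
  · -- degenerate: no vertices
    have hinfl0 : bInfl grp q H τ T = 0 := by
      rw [bInfl]
      apply Finset.sum_eq_zero
      intro co _
      rw [Finset.eq_empty_of_isEmpty (ereach (liveOf grp co) T τ), hH0, mul_zero]
    have hvar0 : bVar grp q H τ T = 0 := by
      rw [bVar]
      apply Finset.sum_eq_zero
      intro co _
      rw [Finset.eq_empty_of_isEmpty (ereach (liveOf grp co) T τ), hH0, hinfl0]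
      norm_num
    rw [hvar0, hinfl0, mul_zero, zero_mul]
  · -- main case
    set K : ℝ := ⨆ v : V, bInfl grp q H τ {v} with hKdef
    have hbdd : BddAbove (Set.range fun v : V => bInfl grp q H τ {v}) :=
      Set.Finite.bddAbove (Set.finite_range _)
    have hKle : ∀ v : V, bInfl grp q H τ {v} ≤ K := fun v => le_ciSup hbdd v
    have hK0 : 0 ≤ K :=
      le_trans (bInfl_nonneg hq0 hq1 hHnn τ {Classical.arbitrary V}) (hKle _)
    have hK : ∀ (J : Finset ι) (t : ℕ), t ≤ τ → ∀ v : V, bInfl (grpR grp J) q H t {v} ≤ K :=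
      fun J t htτ v => le_trans (bInfl_sub_le hq0 hq1 hHmono J htτ {v}) (hKle v)
    have hmain := main_ind hq0 hq1 hH0 hHnn hHmono hHsub htail hcard hK0 hK τ le_rfl
      Finset.univ T
    have hbridge : XF grp H Finset.univ T τ = fun co => H (ereach (liveOf grp co) T τ) := by
      funext co
      show H (ereach (liveOf (grpR grp Finset.univ) co) T τ) = _
      rw [grpR_univ]
    have hEEf : EE q (XF grp H Finset.univ T τ) = bInfl grp q H τ T := by
      rw [hbridge]; rfl
    have hVarf : VarE q (XF grp H Finset.univ T τ) = bVar grp q H τ T := by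
      rw [VarE, hEEf, hbridge]; rfl
    rw [← hVarf]
    set μ := bInfl grp q H τ T with hμdef
    have hμ0 : 0 ≤ μ := bInfl_nonneg hq0 hq1 hHnn τ T
    have hMK : K ≤ max μ K := le_max_right _ _
    have hM0 : 0 ≤ max μ K := le_trans hK0 hMK
    have hbτ : (0 : ℝ) ≤ (b : ℝ) * (τ : ℝ) := by positivity
    calc VarE q (XF grp H Finset.univ T τ)
        ≤ (b : ℝ) * (τ : ℝ) * K * EE q (XF grp H Finset.univ T τ) := hmain
      _ = (b : ℝ) * (τ : ℝ) * K * μ := by rw [hEEf]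
      _ ≤ 2 * (b : ℝ) * (τ : ℝ) * μ * max μ K := by
          have h1 : (b : ℝ) * (τ : ℝ) * K * μ ≤ (b : ℝ) * (τ : ℝ) * max μ K * μ :=
            mul_le_mul_of_nonneg_right (mul_le_mul_of_nonneg_left hMK hbτ) hμ0
          have h2 : 0 ≤ (b : ℝ) * (τ : ℝ) * max μ K * μ :=
            mul_nonneg (mul_nonneg hbτ hM0) hμ0
          nlinarith [h1, h2]


end BDep
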